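/- Let F = (F_t)_{t≥0} be a filtration on a probability space, let η be an F-stopping time, and for each m ≥ 0 let σ(m) be an F-stopping time such that σ(m) ≥ η everywhere and, pathwise, m ↦ σ(m)(ω) is nonincreasing and right-continuous. Define M̲_η(t)(ω) = sup{ m ≥ 0 : σ(m)(ω) > t } if t ≥ η(ω) (with sup ∅ = 0) and M̲_η(t)(ω) = ∞ if t < η(ω). Then for every t ≥ 0 the random variable M̲_η(t) is F_t-measurable; in particular the process (M̲_η(t))_{t≥0} is F-adapted. -/

import Mathlib

open Set Filter Topology MeasureTheory
open scoped ENNReal NNReal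

/-- Lemma 3.2(a) of the paper. The pathwise inverse
`M̲_η(t) = sup{ m ≥ 0 : σ(m) > t }` for `t ≥ η` (and `= ∞` for `t < η`) of a pathwise
nonincreasing, right-continuous family of stopping times `σ(m) ≥ η` is `F_t`-measurable
for every `t`; in particular it defines an adapted process. -/
theorem lowerEnvelope_adapted
    {Ω : Type*} {m0 : MeasurableSpace Ω} (P : MeasureTheory.Measure Ω)
    [IsProbabilityMeasure P]
    (F : Filtration ℝ≥0∞ m0)
    (η : Ω → ℝ≥0∞) (hη : IsStoppingTime F (fun ω => (η ω : WithTop ℝ≥0∞)))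
    (σ : ℝ → Ω → ℝ≥0∞)
    (hσstop : ∀ m : ℝ, 0 ≤ m → IsStoppingTime F (fun ω => (σ m ω : WithTop ℝ≥0∞)))
    (hσge : ∀ m : ℝ, 0 ≤ m → ∀ ω, η ω ≤ σ m ω)
    (hσanti : ∀ ω, AntitoneOn (fun m => σ m ω) (Ici (0:ℝ)))
    (hσrc : ∀ ω, ∀ m : ℝ, 0 ≤ m → ContinuousWithinAt (fun m' => σ m' ω) (Ici m) m)
    (Mlow : ℝ≥0∞ → Ω → ℝ≥0∞)
    (hMlow : ∀ (t : ℝ≥0∞) (ω : Ω), Mlow t ω =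
      if η ω ≤ t then ⨆ m ∈ {m : ℝ | 0 ≤ m ∧ t < σ m ω}, ENNReal.ofReal m else ∞) :
    ∀ t : ℝ≥0∞, Measurable[F t] (Mlow t) := by
  intro t
  classical
  -- rewrite the supremum over reals as a supremum over rationals
  have key : ∀ ω, Mlow t ω =
      if η ω ≤ t then
        (⨆ q : ℚ, ⨆ _ : 0 ≤ (q:ℝ) ∧ t < σ (q:ℝ) ω, ENNReal.ofReal (q:ℝ)) else ∞ := by
    intro ω
    rw [hMlow]
    split_ifs with hle
    · apply le_antisymm
      · refine iSup₂_le fun m hm => ?_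
        obtain ⟨hm0, hmσ⟩ := hm
        rcases eq_or_lt_of_le hm0 with h0 | h0
        · simp [← h0]
        · refine le_of_forall_lt fun c hc => ?_
          have hcne : c ≠ ∞ := hc.ne_top
          have hctm : c.toReal < m := by
            have := ENNReal.toReal_lt_toReal hcne (by simp : (ENNReal.ofReal m) ≠ ∞) |>.mpr hc
            rwa [ENNReal.toReal_ofReal hm0] at this
          obtain ⟨q, hq1, hq2⟩ := exists_rat_btwn hctm
          have hq0 : (0:ℝ) ≤ (q:ℝ) := le_trans ENNReal.toReal_nonneg hq1.le
          have hqσ : t < σ (q:ℝ) ω := lt_of_lt_of_le hmσ (hσanti ω hq0 hm0 hq2.le)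
          have : c < ENNReal.ofReal (q:ℝ) := by
            rw [← ENNReal.ofReal_toReal hcne]
            exact ENNReal.ofReal_lt_ofReal_iff (lt_of_le_of_lt ENNReal.toReal_nonneg hq1) |>.mpr hq1
          exact this.trans_le (le_iSup₂ (f := fun (q : ℚ) (_ : 0 ≤ (q:ℝ) ∧ t < σ (q:ℝ) ω) =>
            ENNReal.ofReal (q:ℝ)) q ⟨hq0, hqσ⟩)
      · exact iSup₂_le fun q hq => le_iSup₂ (f := fun (m : ℝ)
          (_ : m ∈ {m : ℝ | 0 ≤ m ∧ t < σ m ω}) => ENNReal.ofReal m) (q:ℝ) hq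
    · rfl
  have hmeasf : Measurable[F t] fun ω =>
      ⨆ q : ℚ, ⨆ _ : 0 ≤ (q:ℝ) ∧ t < σ (q:ℝ) ω, ENNReal.ofReal (q:ℝ) := by
    refine Measurable.iSup fun q => ?_
    rcases le_or_gt 0 (q:ℝ) with hq0 | hq0
    · have hs : MeasurableSet[F t] {ω | 0 ≤ (q:ℝ) ∧ t < σ (q:ℝ) ω} := by
        have : {ω | 0 ≤ (q:ℝ) ∧ t < σ (q:ℝ) ω} = {ω | σ (q:ℝ) ω ≤ t}ᶜ := by
          ext ω; simp [hq0, not_le]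
        rw [this]
        have h := hσstop (q:ℝ) hq0 t
        simp only [WithTop.coe_le_coe] at h
        exact h.compl
      have heq : (fun ω => ⨆ _ : 0 ≤ (q:ℝ) ∧ t < σ (q:ℝ) ω, ENNReal.ofReal (q:ℝ))
          = Set.indicator {ω | 0 ≤ (q:ℝ) ∧ t < σ (q:ℝ) ω} (fun _ => ENNReal.ofReal (q:ℝ)) := by
        ext ω
        by_cases h : 0 ≤ (q:ℝ) ∧ t < σ (q:ℝ) ω <;>
          simp [iSup_eq_if, h, Set.indicator_apply, Set.mem_setOf_eq]
      rw [heq]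
      exact (measurable_const).indicator hs
    · have : ∀ ω : Ω, (⨆ _ : 0 ≤ (q:ℝ) ∧ t < σ (q:ℝ) ω, ENNReal.ofReal (q:ℝ)) = ⊥ := by
        intro ω
        rw [iSup_eq_if, if_neg]
        exact fun h => absurd h.1 (not_le.mpr hq0)
      simp only [this]
      exact measurable_const
  have : Mlow t = fun ω => if η ω ≤ t then
      (⨆ q : ℚ, ⨆ _ : 0 ≤ (q:ℝ) ∧ t < σ (q:ℝ) ω, ENNReal.ofReal (q:ℝ)) else ∞ :=
    funext key
  rw [this]
  exact Measurable.ite (by have h := hη t; simpa only [WithTop.coe_le_coe] using h) hmeasf measurable_const
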